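/- Let D be a bipartite tournament with \zeta(D) >= 1 and sink sequence (W_0,...,W_{\zeta(D)}). If v_i \in W_i for each i = 0,...,l where 1 <= l < \zeta(D), then D contains the directed path v_l \to v_{l-1} \to ... \to v_1 \to v_0. -/

import Mathlib

/-- `walkN D n u v` : there is a directed walk of length `n` from `u` to `v` in the digraph `D`. -/
def walkN {V : Type*} (D : V → V → Prop) : ℕ → V → V → Prop
  | 0 => fun u v => u = v
  | n+1 => fun u v => ∃ w, D u w ∧ walkN D n w v

/-- The `m`-step competition graph of the digraph `D`. -/
def cmGraph {V : Type*} (D : V → V → Prop) (m : ℕ) : SimpleGraph V where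
  Adj u v := u ≠ v ∧ ∃ z, walkN D m u z ∧ walkN D m v z
  symm := by
    constructor
    intro u v h
    exact ⟨Ne.symm h.1, h.2.imp fun z hz => ⟨hz.2, hz.1⟩⟩
  loopless := by constructor; intro v h; exact h.1 rfl

/-- Sinks of the subdigraph of `D` induced by `S`. -/
def sinks {V : Type*} (D : V → V → Prop) (S : Set V) : Set V :=
  {v ∈ S | ∀ w ∈ S, ¬ D v w}

/-- The digraph sequence `D_0, D_1, …` (as vertex sets) associated with the sink sequence. -/
def Dseq {V : Type*} (D : V → V → Prop) : ℕ → Set V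
  | 0 => Set.univ
  | n+1 => Dseq D n \ sinks D (Dseq D n)

/-- The sink sequence `W_0, W_1, …` of `D`. -/
def Wseq {V : Type*} (D : V → V → Prop) (n : ℕ) : Set V := sinks D (Dseq D n)

/-- `k` is the sink elimination index `ζ(D)`. -/
def IsSinkElimIndex {V : Type*} (D : V → V → Prop) (k : ℕ) : Prop :=
  (Wseq D k = Dseq D k ∨ Wseq D k = ∅) ∧
  ∀ j < k, Wseq D j ≠ Dseq D j ∧ Wseq D j ≠ ∅

/-- A digraph is acyclic iff it has no directed closed walk of positive length. -/
def DigraphAcyclic {V : Type*} (D : V → V → Prop) : Prop :=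
  ∀ v : V, ∀ n : ℕ, 0 < n → ¬ walkN D n v v

/-- `D` is a bipartite tournament with bipartition `(V1, V2)`. -/
structure IsBipartiteTournament {V : Type*} (D : V → V → Prop) (V1 V2 : Set V) : Prop where
  nonempty1 : V1.Nonempty
  nonempty2 : V2.Nonempty
  union_eq : V1 ∪ V2 = Set.univ
  disj : V1 ∩ V2 = ∅
  oriented : ∀ x ∈ V1, ∀ y ∈ V2, Xor' (D x y) (D y x)
  no_intra : ∀ x y, D x y → (x ∈ V1 ∧ y ∈ V2) ∨ (x ∈ V2 ∧ y ∈ V1)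

/-- The competition graph sequence of `D` is eventually equal, starting from `q`. -/
def PeriodicFrom {V : Type*} (D : V → V → Prop) (q : ℕ) : Prop :=
  ∃ r, 0 < r ∧ ∀ i : ℕ, cmGraph D (q + i) = cmGraph D (q + r + i)

/-- `q` is the competition index of `D`. -/
def IsCindex {V : Type*} (D : V → V → Prop) (q : ℕ) : Prop :=
  0 < q ∧ PeriodicFrom D q ∧ ∀ q', 0 < q' → PeriodicFrom D q' → q ≤ q'

/-- `p` is the competition period of `D`, given that `q` is its competition index. -/
def IsCperiod {V : Type*} (D : V → V → Prop) (q p : ℕ) : Prop :=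
  0 < p ∧ cmGraph D q = cmGraph D (q + p) ∧
    ∀ p', 0 < p' → cmGraph D q = cmGraph D (q + p') → p ≤ p'

/-- In a bipartite tournament with `ζ(D) ≥ 1`, if `v_i ∈ W_i` for each
`i = 0, …, l` with `1 ≤ l < ζ(D)`, then `D` contains the directed path
`v_l → v_{l-1} → ⋯ → v_1 → v_0`. -/
theorem directed_path_through_sink_sets {V : Type*} [Fintype V] (D : V → V → Prop)
    (V1 V2 : Set V) (hD : IsBipartiteTournament D V1 V2)
    (k : ℕ) (hk : IsSinkElimIndex D k) (hk1 : 1 ≤ k)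
    (l : ℕ) (hl1 : 1 ≤ l) (hlk : l < k)
    (v : ℕ → V) (hv : ∀ i ≤ l, v i ∈ Wseq D i) :
    ∀ i < l, D (v (i + 1)) (v i) := by
  intro i hi
  obtain ⟨hviD, hvisink⟩ : v i ∈ sinks D (Dseq D i) := hv i (by omega)
  obtain ⟨hvi1D1, hvi1sink⟩ : v (i + 1) ∈ sinks D (Dseq D (i + 1)) := hv (i + 1) (by omega)
  have hvi1D : v (i + 1) ∈ Dseq D i := hvi1D1.1
  have hnotsink : v (i + 1) ∉ sinks D (Dseq D i) := hvi1D1.2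
  have hex : ∃ w ∈ Dseq D i, D (v (i + 1)) w := by
    by_contra h
    push_neg at h
    exact hnotsink ⟨hvi1D, h⟩
  obtain ⟨w, hwD, harc⟩ := hex
  have hwW : w ∈ sinks D (Dseq D i) := by
    by_contra hw
    exact hvi1sink w ⟨hwD, hw⟩ harc
  have hside : ∀ x : V, x ∈ V1 ∨ x ∈ V2 := by
    intro x
    have : x ∈ V1 ∪ V2 := by rw [hD.union_eq]; trivial
    exact this
  -- sides of v(i+1) and w are opposite (since there is an arc)
  rcases hD.no_intra _ _ harc with ⟨h1, h2⟩ | ⟨h1, h2⟩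
  · -- v(i+1) ∈ V1, w ∈ V2
    have hviV2 : v i ∈ V2 := by
      rcases hside (v i) with hv1 | hv2
      · exfalso
        rcases hD.oriented (v i) hv1 w h2 with ⟨ha, _⟩ | ⟨ha, _⟩
        · exact hvisink w hwD ha
        · exact hwW.2 (v i) hviD ha
      · exact hv2
    rcases hD.oriented (v (i + 1)) h1 (v i) hviV2 with ⟨ha, _⟩ | ⟨ha, _⟩
    · exact ha
    · exact absurd ha (hvisink (v (i + 1)) hvi1D)
  · -- v(i+1) ∈ V2, w ∈ V1
    have hviV1 : v i ∈ V1 := by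
      rcases hside (v i) with hv1 | hv2
      · exact hv1
      · exfalso
        rcases hD.oriented w h2 (v i) hv2 with ⟨ha, _⟩ | ⟨ha, _⟩
        · exact hwW.2 (v i) hviD ha
        · exact hvisink w hwD ha
    rcases hD.oriented (v i) hviV1 (v (i + 1)) h1 with ⟨ha, _⟩ | ⟨ha, _⟩
    · exact absurd ha (hvisink (v (i + 1)) hvi1D)
    · exact ha
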